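/- Let k ∈ (0,1), u ∈ ℝ, x = dn(u,k), with sn u, cn u ≥ 0 and nonvanishing denominators. Then cn(3u,k)·k·((k²−1)² + 6(k²−1)x⁴ − 4(k²−2)x⁶ − 3x⁸) = √(k²+x²−1)·(k⁴ + (x²−1)⁴ + k²(−2+4x²−6x⁴+4x⁶)), assuming k²+x²−1 ≥ 0. -/

import Mathlib

/-- `s, c, x` are `sn(u,k), cn(u,k), dn(u,k)`; `s2, c2, d2` are the values at `2u`
obtained from the addition formulas, and `c3 = cn(3u,k)` from the addition formula
for `u + 2u`. -/
theorem cn_triple (k u s c x s2 c2 d2 c3 : ℝ) (hk0 : 0 < k) (hk1 : k < 1)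
    (h1 : s ^ 2 + c ^ 2 = 1) (h2 : k ^ 2 * s ^ 2 + x ^ 2 = 1)
    (hs : 0 ≤ s) (hc : 0 ≤ c) (hkx : 0 ≤ k ^ 2 + x ^ 2 - 1)
    (hD2 : 1 - k ^ 2 * s ^ 4 ≠ 0)
    (hs2 : s2 = 2 * s * c * x / (1 - k ^ 2 * s ^ 4))
    (hc2 : c2 = (c ^ 2 - s ^ 2 * x ^ 2) / (1 - k ^ 2 * s ^ 4))
    (hd2 : d2 = (x ^ 2 - k ^ 2 * s ^ 2 * c ^ 2) / (1 - k ^ 2 * s ^ 4))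
    (hD3 : 1 - k ^ 2 * s ^ 2 * s2 ^ 2 ≠ 0)
    (hc3 : c3 = (c * c2 - s * s2 * x * d2) / (1 - k ^ 2 * s ^ 2 * s2 ^ 2))
    (hden : (k ^ 2 - 1) ^ 2 + 6 * (k ^ 2 - 1) * x ^ 4 - 4 * (k ^ 2 - 2) * x ^ 6
        - 3 * x ^ 8 ≠ 0) :
    c3 * k * ((k ^ 2 - 1) ^ 2 + 6 * (k ^ 2 - 1) * x ^ 4 - 4 * (k ^ 2 - 2) * x ^ 6
        - 3 * x ^ 8)
      = Real.sqrt (k ^ 2 + x ^ 2 - 1) * (k ^ 4 + (x ^ 2 - 1) ^ 4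
        + k ^ 2 * (-2 + 4 * x ^ 2 - 6 * x ^ 4 + 4 * x ^ 6)) := by
  have hsq : Real.sqrt (k ^ 2 + x ^ 2 - 1) = k * c := by
    rw [show k ^ 2 + x ^ 2 - 1 = (k * c) ^ 2 by nlinarith]
    exact Real.sqrt_sq (by positivity)
  subst hc3 hs2 hc2 hd2
  rw [hsq]
  field_simp at hD3 ⊢
  rw [div_eq_iff (div_ne_zero_iff.mp hD3).1]
  have hx : x ^ 2 = 1 - k ^ 2 * s ^ 2 := by linarith
  have hcc : c ^ 2 = 1 - s ^ 2 := by linarith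
  have e4 : x ^ 4 = (1 - k ^ 2 * s ^ 2) ^ 2 := by rw [← hx]; ring
  have e6 : x ^ 6 = (1 - k ^ 2 * s ^ 2) ^ 3 := by rw [← hx]; ring
  have e8 : x ^ 8 = (1 - k ^ 2 * s ^ 2) ^ 4 := by rw [← hx]; ring
  rw [e8, e6, e4, hx, hcc]
  ring
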